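/- In the setting of a cumulative Lie group B-spline with velocity recursion ω^{(j)} = Ad_{A_{j-1}^{-1}} ω^{(j-1)} + λ̇_{j-1} d_{j-1} and ω^{(1)} = 0, the quantity X(u)^{-1} Ẋ(u) equals (ω^{(k)})_∧ and hence lies in the Lie algebra of L. -/

import Mathlib

open NormedSpace

attribute [local instance] Matrix.linftyOpNormedRing Matrix.linftyOpNormedAlgebra

/-- For the cumulative Lie group B-spline
`X(u) = X_i · Π_{j=1}^{k-1} Exp(λ_j(u) d_j)` in a matrix Lie group, with the velocity
recursion `ω^{(1)} = 0`, `ω^{(j)} = Ad_{A_{j-1}⁻¹} ω^{(j-1)} + λ̇_{j-1} d_{j-1}`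
(expressed through the hat map: `hat(Ad_{A⁻¹} w) = A⁻¹ hat(w) A`), the quantity `X(u)⁻¹ Ẋ(u)` equals `(ω^{(k)})_∧` and hence lies in the Lie algebra of `L`
(the range of the hat map). -/
theorem body_velocity_in_lie_algebra {n p : ℕ} (k : ℕ) (hk : 1 ≤ k)
    (hat : (Fin p → ℝ) →ₗ[ℝ] Matrix (Fin n) (Fin n) ℝ)
    (Xi : Matrix (Fin n) (Fin n) ℝ) (hXi : IsUnit Xi)
    (lam : ℕ → ℝ → ℝ) (d : ℕ → Fin p → ℝ)
    (hlam : ∀ j, Differentiable ℝ (lam j))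
    (A : ℕ → ℝ → Matrix (Fin n) (Fin n) ℝ)
    (hA : ∀ j u, A j u = exp (lam j u • hat (d j)))
    (X : ℝ → Matrix (Fin n) (Fin n) ℝ)
    (hX : ∀ u, X u = Xi * ((List.range (k - 1)).map (fun j => A (j + 1) u)).prod)
    (ω : ℕ → ℝ → Fin p → ℝ)
    (hω1 : ∀ u, ω 1 u = 0)
    (hωrec : ∀ j u, 2 ≤ j → j ≤ k →
      hat (ω j u) = (A (j - 1) u)⁻¹ * hat (ω (j - 1) u) * A (j - 1) u
        + deriv (lam (j - 1)) u • hat (d (j - 1)))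
    (u : ℝ) :
    (X u)⁻¹ * deriv X u = hat (ω k u) ∧ (X u)⁻¹ * deriv X u ∈ Set.range hat := by
  -- derivative of each factor
  have hAderiv : ∀ j, HasDerivAt (fun v => A j v)
      (deriv (lam j) u • (A j u * hat (d j))) u := by
    intro j
    have h1 : HasDerivAt (fun t : ℝ => exp (t • hat (d j)))
        (exp (lam j u • hat (d j)) * hat (d j)) (lam j u) :=
      hasDerivAt_exp_smul_const (𝕂 := ℝ) (hat (d j)) (lam j u)
    have h2 := h1.scomp u ((hlam j).differentiableAt.hasDerivAt)
    have : (fun v => A j v) = fun v => exp (lam j v • hat (d j)) := by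
      funext v; exact hA j v
    rw [this, hA j u]
    exact h2
  have hAunit : ∀ j, IsUnit (A j u) := by
    intro j; rw [hA j u]; exact Matrix.isUnit_exp _
  set P : ℕ → ℝ → Matrix (Fin n) (Fin n) ℝ :=
    fun m v => ((List.range m).map (fun j => A (j + 1) v)).prod with hP
  have key : ∀ m, m + 1 ≤ k → IsUnit (P m u) ∧
      HasDerivAt (fun v => P m v) (P m u * hat (ω (m + 1) u)) u := by
    intro m
    induction m with
    | zero =>
      intro _
      constructor
      · simp [hP]
      · have : (fun v : ℝ => P 0 v) = fun _ => (1 : Matrix (Fin n) (Fin n) ℝ) := by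
          funext v; simp [hP]
        rw [this]
        rw [hω1 u, map_zero, mul_zero]; exact hasDerivAt_const u _
    | succ m ih =>
      intro hmk
      obtain ⟨ihu, ihd⟩ := ih (le_trans (Nat.le_succ _) hmk)
      have hsplit : ∀ v, P (m + 1) v = P m v * A (m + 1) v := by
        intro v
        simp [hP, List.range_succ]
      constructor
      · rw [hsplit u]; exact ihu.mul (hAunit (m + 1))
      · have hd : HasDerivAt (fun v => P m v * A (m + 1) v)
            (P m u * hat (ω (m + 1) u) * A (m + 1) u
              + P m u * (deriv (lam (m + 1)) u • (A (m + 1) u * hat (d (m + 1))))) u :=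
          ihd.mul (hAderiv (m + 1))
        have heq : (fun v => P (m + 1) v) = fun v => P m v * A (m + 1) v := by
          funext v; exact hsplit v
        rw [heq, hsplit u]
        convert hd using 1
        have hrec := hωrec (m + 2) u (by omega) (by omega)
        rw [show m + 2 - 1 = m + 1 from rfl] at hrec
        have hAA : A (m + 1) u * (A (m + 1) u)⁻¹ = 1 :=
          Matrix.mul_nonsing_inv _ ((Matrix.isUnit_iff_isUnit_det _).mp (hAunit (m + 1)))
        have hdet := (Matrix.isUnit_iff_isUnit_det _).mp (hAunit (m + 1))
        rw [hrec, mul_add]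
        congr 1
        · rw [mul_assoc (P m u), mul_assoc ((A (m + 1) u)⁻¹),
            Matrix.mul_nonsing_inv_cancel_left _ _ hdet, ← mul_assoc]
        · rw [mul_smul_comm, mul_smul_comm, mul_assoc]
      
  obtain ⟨hPu, hPd⟩ := key (k - 1) (by omega)
  have hXd : HasDerivAt X (Xi * (P (k - 1) u * hat (ω k u))) u := by
    have : X = fun v => Xi * P (k - 1) v := by funext v; exact hX v
    rw [this]
    have := hPd.const_mul Xi
    rwa [Nat.sub_add_cancel hk] at this
  have hderiv : deriv X u = Xi * (P (k - 1) u * hat (ω k u)) := hXd.deriv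
  have hXu : X u = Xi * P (k - 1) u := hX u
  have hmain : (X u)⁻¹ * deriv X u = hat (ω k u) := by
    rw [hderiv, hXu, Matrix.mul_inv_rev]
    have h1 : (P (k - 1) u)⁻¹ * P (k - 1) u = 1 :=
      Matrix.nonsing_inv_mul _ ((Matrix.isUnit_iff_isUnit_det _).mp hPu)
    have h2 : Xi⁻¹ * Xi = 1 :=
      Matrix.nonsing_inv_mul _ ((Matrix.isUnit_iff_isUnit_det _).mp hXi)
    rw [mul_assoc, ← mul_assoc Xi⁻¹, h2, one_mul, ← mul_assoc, h1, one_mul]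
  exact ⟨hmain, hmain ▸ ⟨ω k u, rfl⟩⟩
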